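/- arXiv:1907.03101 — 3 statements merged into one kernel-verified Lean document; each statement's English description precedes it below -/
import Mathlib

section
/- Let d ≥ 1, N ≥ 1 be integers and x ∈ T^d be such that for every M ≤ N one has |S_d(x; M)| ≤ c(κ M^α + K) for some real α, κ, K ≥ 0 and absolute constant c. Then for any τ with 0 < τ = O(1) and any y ∈ T^d with 0 ≤ y_i − x_i < τ N^{−i} for i = 1, ..., d, one has |S_d(y; N) − S_d(x; N)| ≤ C τ (κ N^α + K) for an absolute constant C. -/
open Complex

lemma aux_exp_sub_one (t : ℝ) : ‖Complex.exp (t * Complex.I) - 1‖ ≤ |t| := by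
  have h : Complex.exp (t * Complex.I) - 1 = ((Real.cos t - 1 : ℝ) : ℂ) + (Real.sin t : ℝ) * Complex.I := by
    rw [Complex.exp_mul_I]
    push_cast
    ring
  rw [h, Complex.norm_add_mul_I]
  have h2 : (Real.cos t - 1) ^ 2 + Real.sin t ^ 2 = (2 * |Real.sin (t / 2)|) ^ 2 := by
    have hs := Real.sin_sq_eq_half_sub (t / 2)
    have : 2 * (t / 2) = t := by ring
    rw [this] at hs
    have hcs := Real.sin_sq_add_cos_sq t
    rw [mul_pow, _root_.sq_abs]
    nlinarith
  rw [h2, Real.sqrt_sq (by positivity)]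
  calc 2 * |Real.sin (t / 2)| ≤ 2 * |t / 2| := by
        have := Real.abs_sin_le_abs (x := t / 2)
        linarith
    _ = |t| := by rw [abs_div]; simp; ring

lemma aux_exp_sub_exp (s t : ℝ) :
    ‖Complex.exp (s * Complex.I) - Complex.exp (t * Complex.I)‖ ≤ |s - t| := by
  have h : Complex.exp (s * Complex.I) - Complex.exp (t * Complex.I)
      = Complex.exp (t * Complex.I) * (Complex.exp (((s - t : ℝ) : ℂ) * Complex.I) - 1) := by
    rw [mul_sub, ← Complex.exp_add, mul_one]
    push_cast
    ring_nf
  rw [h, norm_mul, Complex.norm_exp_ofReal_mul_I, one_mul]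
  exact aux_exp_sub_one (s - t)

/-- The Weyl sum `S_d(x; N) = ∑_{n=1}^N e(x_1 n + … + x_d n^d)`. -/
noncomputable def weylSum (d : ℕ) (x : Fin d → ℝ) (N : ℕ) : ℂ :=
  ∑ n ∈ Finset.Icc 1 N,
    Complex.exp (2 * Real.pi * Complex.I * ∑ i : Fin d, (x i : ℂ) * (n : ℂ) ^ ((i : ℕ) + 1))

theorem weyl_sum_continuity (d : ℕ) (hd : 1 ≤ d) (c : ℝ) (hc : 0 < c) (T : ℝ) (hT : 0 < T) :
    ∃ C : ℝ, 0 < C ∧ ∀ N : ℕ, 1 ≤ N → ∀ x : Fin d → ℝ, ∀ α κ K : ℝ,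
      0 ≤ α → 0 ≤ κ → 0 ≤ K →
      (∀ M : ℕ, 1 ≤ M → M ≤ N →
        ‖weylSum d x M‖ ≤ c * (κ * (M : ℝ) ^ α + K)) →
      ∀ τ : ℝ, 0 < τ → τ ≤ T → ∀ y : Fin d → ℝ,
        (∀ i : Fin d, 0 ≤ y i - x i ∧ y i - x i < τ / (N : ℝ) ^ ((i : ℕ) + 1)) →
        ‖weylSum d y N - weylSum d x N‖ ≤ C * τ * (κ * (N : ℝ) ^ α + K) := by
  refine ⟨4 * Real.pi * d * c, by positivity, ?_⟩
  intro N hN x α κ K hα hκ hK hbound τ hτ hτT y hy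
  -- notation
  set θ : ℕ → ℝ := fun n => 2 * Real.pi * ∑ i : Fin d, (y i - x i) * (n : ℝ) ^ ((i : ℕ) + 1)
    with hθdef
  set f : ℕ → ℂ := fun i => Complex.exp ((θ (i + 1) : ℝ) * Complex.I) - 1 with hfdef
  set g : ℕ → ℂ := fun i =>
    Complex.exp (2 * Real.pi * Complex.I *
      ∑ j : Fin d, (x j : ℂ) * (((i + 1 : ℕ) : ℕ) : ℂ) ^ ((j : ℕ) + 1) ) with hgdef
  have hNpos : (0 : ℝ) < (N : ℝ) := by exact_mod_cast hN
  -- weylSum as a range sum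
  have hA : ∀ M : ℕ, weylSum d x M = ∑ i ∈ Finset.range M, g i := by
    intro M
    rw [weylSum, ← Finset.Ico_add_one_right_eq_Icc, Finset.sum_Ico_eq_sum_range]
    simp only [Nat.add_sub_cancel]
    refine Finset.sum_congr rfl fun i _ => ?_
    simp [hgdef, add_comm 1 i]
  -- difference as sum of f i * g i
  have hdiff : weylSum d y N - weylSum d x N = ∑ i ∈ Finset.range N, f i * g i := by
    have hy' : weylSum d y N = ∑ i ∈ Finset.range N, (f i + 1) * g i := by
      rw [weylSum, ← Finset.Ico_add_one_right_eq_Icc, Finset.sum_Ico_eq_sum_range]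
      simp only [Nat.add_sub_cancel]
      refine Finset.sum_congr rfl fun i _ => ?_
      have hexp : ((θ (i + 1) : ℝ) : ℂ) * Complex.I +
          2 * Real.pi * Complex.I * ∑ j : Fin d, (x j : ℂ) * (((i + 1 : ℕ) : ℕ) : ℂ) ^ ((j : ℕ) + 1)
          = 2 * Real.pi * Complex.I * ∑ j : Fin d, (y j : ℂ) * (((1 + i : ℕ) : ℕ) : ℂ) ^ ((j : ℕ) + 1) := by
        rw [hθdef]
        push_cast
        simp only [Finset.mul_sum, Finset.sum_mul, ← Finset.sum_add_distrib]
        refine Finset.sum_congr rfl fun j _ => ?_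
        ring
      simp only [hfdef, hgdef, sub_add_cancel, ← Complex.exp_add, hexp]
    rw [hy', hA N, ← Finset.sum_sub_distrib]
    refine Finset.sum_congr rfl fun i _ => ?_
    ring
  -- bound B
  set B : ℝ := c * (κ * (N : ℝ) ^ α + K) with hBdef
  have hB0 : 0 ≤ B := by
    have : (0:ℝ) ≤ (N : ℝ) ^ α := Real.rpow_nonneg (le_of_lt hNpos) α
    positivity
  have hAle : ∀ M : ℕ, 1 ≤ M → M ≤ N → ‖weylSum d x M‖ ≤ B := by
    intro M h1 h2
    refine (hbound M h1 h2).trans ?_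
    have hMN : (M : ℝ) ^ α ≤ (N : ℝ) ^ α :=
      Real.rpow_le_rpow (by positivity) (by exact_mod_cast h2) hα
    have := mul_le_mul_of_nonneg_left hMN hκ
    rw [hBdef]
    nlinarith
  -- properties of θ
  have hθ0 : ∀ n : ℕ, 0 ≤ θ n := by
    intro n
    rw [hθdef]
    have h := Finset.sum_nonneg (s := (Finset.univ : Finset (Fin d)))
      (fun i _ => mul_nonneg (hy i).1 (by positivity : (0:ℝ) ≤ (n : ℝ) ^ ((i : ℕ) + 1)))
    positivity
  have hθmono : ∀ m n : ℕ, m ≤ n → θ m ≤ θ n := by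
    intro m n hmn
    rw [hθdef]
    have h2π : (0:ℝ) ≤ 2 * Real.pi := by positivity
    refine mul_le_mul_of_nonneg_left (Finset.sum_le_sum fun i _ => ?_) h2π
    refine mul_le_mul_of_nonneg_left ?_ (hy i).1
    exact pow_le_pow_left₀ (by positivity) (by exact_mod_cast hmn) _
  have hθN : θ N ≤ 2 * Real.pi * (d * τ) := by
    rw [hθdef]
    have h2π : (0:ℝ) ≤ 2 * Real.pi := by positivity
    refine mul_le_mul_of_nonneg_left ?_ h2π
    calc ∑ i : Fin d, (y i - x i) * (N : ℝ) ^ ((i : ℕ) + 1)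
        ≤ ∑ _i : Fin d, τ := by
          refine Finset.sum_le_sum fun i _ => ?_
          have hNp : (0:ℝ) < (N : ℝ) ^ ((i : ℕ) + 1) := by positivity
          have := (hy i).2
          rw [div_eq_mul_inv] at this
          calc (y i - x i) * (N : ℝ) ^ ((i : ℕ) + 1)
              ≤ (τ * ((N : ℝ) ^ ((i : ℕ) + 1))⁻¹) * (N : ℝ) ^ ((i : ℕ) + 1) :=
                mul_le_mul_of_nonneg_right (le_of_lt this) (le_of_lt hNp)
            _ = τ := by field_simp
      _ = d * τ := by simp [Finset.sum_const, mul_comm]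
  -- Abel summation
  have habel := Finset.sum_range_by_parts f g N
  simp only [smul_eq_mul] at habel
  rw [hdiff, habel]
  -- bound the two pieces
  have hterm1 : ‖f (N - 1) * ∑ i ∈ Finset.range N, g i‖
      ≤ (2 * Real.pi * (d * τ)) * B := by
    rw [norm_mul]
    have hNsub : N - 1 + 1 = N := Nat.sub_add_cancel hN
    have h1 : ‖f (N - 1)‖ ≤ 2 * Real.pi * (d * τ) := by
      rw [hfdef]
      simp only [hNsub]
      refine (aux_exp_sub_one (θ N)).trans ?_
      rw [_root_.abs_of_nonneg (hθ0 N)]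
      exact hθN
    have h2 : ‖∑ i ∈ Finset.range N, g i‖ ≤ B := by
      rw [← hA N]; exact hAle N hN le_rfl
    exact mul_le_mul h1 h2 (norm_nonneg _) (by positivity)
  have hterm2 : ‖∑ i ∈ Finset.range (N - 1), (f (i + 1) - f i) * ∑ j ∈ Finset.range (i + 1), g j‖
      ≤ (2 * Real.pi * (d * τ)) * B := by
    refine (norm_sum_le _ _).trans ?_
    have hstep : ∀ i ∈ Finset.range (N - 1),
        ‖(f (i + 1) - f i) * ∑ j ∈ Finset.range (i + 1), g j‖
          ≤ (θ (i + 2) - θ (i + 1)) * B := by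
      intro i hi
      rw [norm_mul]
      have hθpos : 0 ≤ θ (i + 2) - θ (i + 1) := by
        linarith [hθmono (i + 1) (i + 2) (by omega)]
      have h1 : ‖f (i + 1) - f i‖ ≤ θ (i + 2) - θ (i + 1) := by
        rw [hfdef]
        simp only [sub_sub_sub_cancel_right]
        refine (aux_exp_sub_exp (θ (i + 1 + 1)) (θ (i + 1))).trans ?_
        rw [_root_.abs_of_nonneg hθpos]
      have hile : i + 1 ≤ N := by
        have := Finset.mem_range.mp hi; omega
      have h2 : ‖∑ j ∈ Finset.range (i + 1), g j‖ ≤ B := by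
        rw [← hA (i + 1)]; exact hAle (i + 1) (by omega) hile
      exact mul_le_mul h1 h2 (norm_nonneg _) hθpos
    refine (Finset.sum_le_sum hstep).trans ?_
    rw [← Finset.sum_mul]
    have htel : ∑ i ∈ Finset.range (N - 1), (θ (i + 2) - θ (i + 1))
        = θ N - θ 1 := by
      have := Finset.sum_range_sub (fun i => θ (i + 1)) (N - 1)
      simpa [Nat.sub_add_cancel hN] using this
    rw [htel]
    have : θ N - θ 1 ≤ 2 * Real.pi * (d * τ) := by
      have := hθ0 1
      linarith [hθN]
    exact mul_le_mul_of_nonneg_right this hB0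
  have htri : ∀ a b : ℂ, ‖a - b‖ ≤ ‖a‖ + ‖b‖ := by
    intro a b
    exact norm_sub_le a b
  refine le_trans (htri _ _) ?_
  refine le_trans (add_le_add hterm1 hterm2) (le_of_eq ?_)
  rw [hBdef]; ring
end

section
/- Let N ≥ 1, m ≥ 2 be integers, d ≥ 2, and a = (a_1, ..., a_d) with each a_j ∈ Z_m \ {0}. Suppose |S_d(a/m; n)| ≤ c K for all n ≤ N and some K ≥ 0. Then for any τ > 0 with τ = O(1) and any x ∈ T^d with 0 ≤ x_j − a_j/m < τ N^{−j} for j = 1, ..., d, we have |S_d(x; N) − S_d(a/m; N)| ≤ C τ K for an absolute constant C. -/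
open Complex

/-- The real phase of the Weyl sum summand. -/
noncomputable def wP (d : ℕ) (y : Fin d → ℝ) (n : ℕ) : ℝ :=
  2 * Real.pi * ∑ i : Fin d, y i * (n : ℝ) ^ ((i : ℕ) + 1)

lemma weylSum_eq (d : ℕ) (y : Fin d → ℝ) (N : ℕ) :
    weylSum d y N = ∑ n ∈ Finset.Icc 1 N, Complex.exp ((wP d y n : ℝ) * I) := by
  unfold weylSum wP
  refine Finset.sum_congr rfl fun n _ => ?_
  congr 1
  push_cast
  ring

lemma abs_exp_I_sub_one (t : ℝ) : ‖Complex.exp (t * I) - 1‖ ≤ |t| := by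
  have hre : (Complex.exp (t * I) - 1).re = Real.cos t - 1 := by
    simp [Complex.exp_ofReal_mul_I_re]
  have him : (Complex.exp (t * I) - 1).im = Real.sin t := by
    simp [Complex.exp_ofReal_mul_I_im]
  rw [Complex.norm_def, Complex.normSq_apply, hre, him]
  have hcos : 1 - t ^ 2 / 2 ≤ Real.cos t := Real.one_sub_sq_div_two_le_cos
  have h1 : (Real.cos t - 1) * (Real.cos t - 1) + Real.sin t * Real.sin t ≤ t ^ 2 := by
    have := Real.sin_sq_add_cos_sq t
    nlinarith [Real.cos_le_one t]
  calc Real.sqrt ((Real.cos t - 1) * (Real.cos t - 1) + Real.sin t * Real.sin t)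
      ≤ Real.sqrt (t ^ 2) := Real.sqrt_le_sqrt h1
    _ = |t| := Real.sqrt_sq_eq_abs t

lemma abs_exp_I_sub_exp_I (s t : ℝ) :
    ‖Complex.exp (t * I) - Complex.exp (s * I)‖ ≤ |t - s| := by
  have h : Complex.exp (t * I) - Complex.exp (s * I)
      = Complex.exp (s * I) * (Complex.exp (((t - s : ℝ) : ℂ) * I) - 1) := by
    rw [mul_sub, ← Complex.exp_add, mul_one]
    push_cast
    ring_nf
  rw [h, norm_mul, Complex.norm_exp_ofReal_mul_I, one_mul]
  exact abs_exp_I_sub_one (t - s)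

theorem weyl_sum_rational_approx (d : ℕ) (hd : 2 ≤ d) (c : ℝ) (hc : 0 < c)
    (T : ℝ) (hT : 0 < T) :
    ∃ C : ℝ, 0 < C ∧ ∀ N : ℕ, 1 ≤ N → ∀ m : ℕ, 2 ≤ m → ∀ a : Fin d → ℤ,
      (∀ j : Fin d, ¬ (m : ℤ) ∣ a j) → ∀ K : ℝ, 0 ≤ K →
      (∀ n : ℕ, 1 ≤ n → n ≤ N →
        ‖weylSum d (fun j => (a j : ℝ) / m) n‖ ≤ c * K) →
      ∀ τ : ℝ, 0 < τ → τ ≤ T → ∀ x : Fin d → ℝ,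
        (∀ j : Fin d, 0 ≤ x j - (a j : ℝ) / m ∧
          x j - (a j : ℝ) / m < τ / (N : ℝ) ^ ((j : ℕ) + 1)) →
        ‖weylSum d x N - weylSum d (fun j => (a j : ℝ) / m) N‖ ≤ C * τ * K := by
  have hdR : (0 : ℝ) < d := by exact_mod_cast lt_of_lt_of_le two_pos hd
  refine ⟨4 * Real.pi * d * c, by positivity, ?_⟩
  intro N hN m hm a ha K hK hbound τ hτ hτT x hx
  set q : Fin d → ℝ := fun j => (a j : ℝ) / m with hqdef
  set δ : Fin d → ℝ := fun j => x j - q j with hδdef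
  have hδ0 : ∀ j, 0 ≤ δ j := fun j => (hx j).1
  have hδlt : ∀ j, δ j < τ / (N : ℝ) ^ ((j : ℕ) + 1) := fun j => (hx j).2
  have hNpos : (0 : ℝ) < (N : ℝ) := by exact_mod_cast hN
  -- monotonicity of the phase
  have Pmono : ∀ {n₁ n₂ : ℕ}, n₁ ≤ n₂ → wP d δ n₁ ≤ wP d δ n₂ := by
    intro n₁ n₂ h
    unfold wP
    have hn : ((n₁ : ℝ)) ≤ (n₂ : ℝ) := by exact_mod_cast h
    refine mul_le_mul_of_nonneg_left (Finset.sum_le_sum fun i _ => ?_) (by positivity)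
    exact mul_le_mul_of_nonneg_left
      (pow_le_pow_left₀ (by positivity) hn _) (hδ0 i)
  have Ppos : ∀ n : ℕ, 0 ≤ wP d δ n := by
    intro n
    unfold wP
    have : 0 ≤ ∑ i : Fin d, δ i * (n : ℝ) ^ ((i : ℕ) + 1) :=
      Finset.sum_nonneg fun i _ => mul_nonneg (hδ0 i) (by positivity)
    positivity
  have Pbound : ∀ n : ℕ, n ≤ N → wP d δ n ≤ 2 * Real.pi * (d * τ) := by
    intro n hn
    unfold wP
    refine mul_le_mul_of_nonneg_left ?_ (by positivity)
    have hterm : ∀ i : Fin d, δ i * (n : ℝ) ^ ((i : ℕ) + 1) ≤ τ := by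
      intro i
      have hnN : (n : ℝ) ^ ((i : ℕ) + 1) ≤ (N : ℝ) ^ ((i : ℕ) + 1) :=
        pow_le_pow_left₀ (by positivity) (by exact_mod_cast hn) _
      have h1 : δ i * (n : ℝ) ^ ((i : ℕ) + 1) ≤ δ i * (N : ℝ) ^ ((i : ℕ) + 1) :=
        mul_le_mul_of_nonneg_left hnN (hδ0 i)
      have h2 : δ i * (N : ℝ) ^ ((i : ℕ) + 1) ≤
          (τ / (N : ℝ) ^ ((i : ℕ) + 1)) * (N : ℝ) ^ ((i : ℕ) + 1) :=
        mul_le_mul_of_nonneg_right (le_of_lt (hδlt i)) (by positivity)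
      have h3 : (τ / (N : ℝ) ^ ((i : ℕ) + 1)) * (N : ℝ) ^ ((i : ℕ) + 1) = τ := by
        field_simp
      exact le_of_le_of_eq (le_trans h1 h2) h3
    calc ∑ i : Fin d, δ i * (n : ℝ) ^ ((i : ℕ) + 1) ≤ ∑ _i : Fin d, τ :=
          Finset.sum_le_sum fun i _ => hterm i
      _ = d * τ := by simp [mul_comm]
  -- reindexing Icc 1 n as range n
  have hIcc : ∀ (F : ℕ → ℂ) (n : ℕ),
      ∑ k ∈ Finset.Icc 1 n, F k = ∑ i ∈ Finset.range n, F (1 + i) := by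
    intro F n
    rw [← Finset.Ico_add_one_right_eq_Icc, Finset.sum_Ico_eq_sum_range]
    simp
  -- splitting the difference
  have hsplit : weylSum d x N - weylSum d q N =
      ∑ n ∈ Finset.Icc 1 N,
        (Complex.exp ((wP d δ n : ℝ) * I) - 1) * Complex.exp ((wP d q n : ℝ) * I) := by
    rw [weylSum_eq, weylSum_eq, ← Finset.sum_sub_distrib]
    refine Finset.sum_congr rfl fun n _ => ?_
    have hx' : wP d x n = wP d q n + wP d δ n := by
      unfold wP
      rw [← mul_add, ← Finset.sum_add_distrib]
      congr 1
      refine Finset.sum_congr rfl fun i _ => ?_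
      simp only [hδdef]
      ring
    rw [hx', sub_mul, one_mul, ← Complex.exp_add]
    congr 2
    push_cast
    ring
  set f : ℕ → ℂ := fun i => Complex.exp ((wP d δ (1 + i) : ℝ) * I) - 1 with hfdef
  set g : ℕ → ℂ := fun i => Complex.exp ((wP d q (1 + i) : ℝ) * I) with hgdef
  have hG : ∀ n : ℕ, ∑ i ∈ Finset.range n, g i = weylSum d q n := by
    intro n
    rw [weylSum_eq, hIcc]
  have habel := Finset.sum_range_by_parts f g N
  simp only [smul_eq_mul] at habel
  have hmain : weylSum d x N - weylSum d q N =
      f (N - 1) * weylSum d q N -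
        ∑ i ∈ Finset.range (N - 1), (f (i + 1) - f i) * weylSum d q (i + 1) := by
    rw [hsplit, hIcc, habel, hG]
    congr 1
    refine Finset.sum_congr rfl fun i _ => ?_
    rw [hG]
  rw [hmain]
  have hcK : ∀ n : ℕ, 1 ≤ n → n ≤ N → ‖weylSum d q n‖ ≤ c * K := hbound
  have hcK0 : 0 ≤ c * K := mul_nonneg hc.le hK
  -- bound the boundary term
  have hb1 : ‖f (N - 1)‖ ≤ 2 * Real.pi * (d * τ) := by
    have he : 1 + (N - 1) = N := by omega
    calc ‖f (N - 1)‖ ≤ |wP d δ (1 + (N - 1))| := abs_exp_I_sub_one _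
      _ = wP d δ N := by rw [he, _root_.abs_of_nonneg (Ppos N)]
      _ ≤ 2 * Real.pi * (d * τ) := Pbound N le_rfl
  -- bound the variation terms
  have hb2 : ∀ i : ℕ, ‖f (i + 1) - f i‖ ≤ wP d δ (i + 2) - wP d δ (i + 1) := by
    intro i
    have he1 : 1 + (i + 1) = i + 2 := by omega
    have he2 : 1 + i = i + 1 := by omega
    have : f (i + 1) - f i =
        Complex.exp ((wP d δ (i + 2) : ℝ) * I) - Complex.exp ((wP d δ (i + 1) : ℝ) * I) := by
      simp only [hfdef, he1, he2]
      ring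
    rw [this]
    calc ‖_‖ ≤ |wP d δ (i + 2) - wP d δ (i + 1)| := abs_exp_I_sub_exp_I _ _
      _ = wP d δ (i + 2) - wP d δ (i + 1) := _root_.abs_of_nonneg (by
          have := Pmono (show i + 1 ≤ i + 2 by omega); linarith)
  have htel : ∑ i ∈ Finset.range (N - 1), (wP d δ (i + 2) - wP d δ (i + 1)) =
      wP d δ N - wP d δ 1 := by
    have := Finset.sum_range_sub (fun i => wP d δ (i + 1)) (N - 1)
    rw [show N - 1 + 1 = N by omega] at this
    convert this using 2
  calc ‖f (N - 1) * weylSum d q N -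
        ∑ i ∈ Finset.range (N - 1), (f (i + 1) - f i) * weylSum d q (i + 1)‖
      ≤ ‖f (N - 1) * weylSum d q N‖ +
        ‖∑ i ∈ Finset.range (N - 1), (f (i + 1) - f i) * weylSum d q (i + 1)‖ := by
        exact norm_sub_le _ _
    _ ≤ (2 * Real.pi * (d * τ)) * (c * K) +
        ∑ i ∈ Finset.range (N - 1), (wP d δ (i + 2) - wP d δ (i + 1)) * (c * K) := by
        gcongr ?_ + ?_
        · rw [norm_mul]
          exact mul_le_mul hb1 (hcK N hN le_rfl) (norm_nonneg _)
            (by positivity)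
        · refine le_trans (norm_sum_le _ _) (Finset.sum_le_sum fun i hi => ?_)
          rw [Finset.mem_range] at hi
          rw [norm_mul]
          have hnn : (0:ℝ) ≤ wP d δ (i + 2) - wP d δ (i + 1) := by
            have := Pmono (show i + 1 ≤ i + 2 by omega); linarith
          exact mul_le_mul (hb2 i) (hcK (i + 1) (by omega) (by omega))
            (norm_nonneg _) hnn
    _ ≤ (2 * Real.pi * (d * τ)) * (c * K) + (2 * Real.pi * (d * τ)) * (c * K) := by
        rw [← Finset.sum_mul, htel]
        have h1 : wP d δ N - wP d δ 1 ≤ 2 * Real.pi * (d * τ) := by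
          have := Ppos 1
          have := Pbound N le_rfl
          linarith
        exact add_le_add_right (mul_le_mul_of_nonneg_right h1 hcK0) _
    _ = 4 * Real.pi * ↑d * c * τ * K := by ring
end

section
/- Let p be a prime and a, b integers with 1 ≤ a, b ≤ p−1 and gcd(ab, 2p) = 1. Then the set of partial sums {∑_{n=1}^{N} exp(2πi(a n + b n²)/(4p)) : N ∈ N} is a bounded subset of C; in fact every such partial sum has absolute value at most C √p log p for an absolute constant C. -/
open Complex

namespace PSB
open Finset


noncomputable def E (p : ℕ) (t : ℤ) : ℂ := Complex.exp (2 * Real.pi * Complex.I * t / (4 * p))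

lemma E_eq (p : ℕ) (t : ℤ) : E p t = Complex.exp ((Real.pi * t / (2 * p) : ℝ) * Complex.I) := by
  unfold E; congr 1; push_cast; ring

lemma E_add (p : ℕ) (s t : ℤ) : E p (s + t) = E p s * E p t := by
  unfold E; rw [← Complex.exp_add]; congr 1; push_cast; ring

lemma E_abs (p : ℕ) (t : ℤ) : ‖E p t‖ = 1 := by
  rw [E_eq]; exact Complex.norm_exp_ofReal_mul_I _

lemma E_conj (p : ℕ) (t : ℤ) : (starRingEnd ℂ) (E p t) = E p (-t) := by
  rw [E_eq, E_eq, ← Complex.exp_conj]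
  congr 1
  rw [map_mul, Complex.conj_I, Complex.conj_ofReal]
  push_cast
  ring

lemma E_pow (p : ℕ) (u : ℤ) (k : ℕ) : E p (u * k) = E p u ^ k := by
  unfold E; rw [← Complex.exp_nat_mul]; congr 1; push_cast; ring

lemma E_four_p (p : ℕ) (hp : (p:ℂ) ≠ 0) (k : ℤ) : E p (4 * p * k) = 1 := by
  unfold E
  rw [show 2 * Real.pi * Complex.I * ((4 * p * k : ℤ) : ℂ) / (4 * p) = k * (2 * Real.pi * Complex.I) by
    push_cast; field_simp]
  exact Complex.exp_int_mul_two_pi_mul_I k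

lemma E_two_p_odd (p : ℕ) (hp : (p:ℂ) ≠ 0) (a : ℕ) (ha : Odd a) : E p (2 * p * a) = -1 := by
  unfold E
  rw [show 2 * Real.pi * Complex.I * ((2 * p * a : ℤ) : ℂ) / (4 * p) = a * (Real.pi * Complex.I) by
    push_cast; field_simp; ring]
  rw [Complex.exp_nat_mul, Complex.exp_pi_mul_I, ha.neg_one_pow]

lemma exp_two_mul_I_sub_one (y : ℝ) :
    Complex.exp ((2 * y : ℝ) * Complex.I) - 1
      = Complex.exp ((y : ℝ) * Complex.I) * (2 * Complex.I * Complex.sin (y : ℝ)) := by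
  have h1 : Complex.exp ((y:ℝ)*Complex.I) * Complex.exp ((y:ℝ)*Complex.I)
      = Complex.exp ((2*y:ℝ)*Complex.I) := by
    rw [← Complex.exp_add]; push_cast; ring_nf
  have h2 : Complex.exp ((y:ℝ)*Complex.I) * Complex.exp (-(y:ℂ) * Complex.I) = 1 := by
    rw [← Complex.exp_add]
    norm_num
  have h3 : Complex.exp ((y:ℝ)*Complex.I) - Complex.exp (-(y:ℂ) * Complex.I)
      = 2 * Complex.I * Complex.sin (y:ℝ) := by
    rw [Complex.sin]
    linear_combination (Complex.exp ((y:ℂ)*Complex.I) - Complex.exp (-(y:ℂ)*Complex.I)) * Complex.I_sq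
  linear_combination (-1) * h1 + h2 + Complex.exp ((y:ℝ)*Complex.I) * h3

lemma E_sub_one_abs (p : ℕ) (t : ℤ) :
    ‖E p t - 1‖ = 2 * |Real.sin (Real.pi * t / (4 * p))| := by
  rw [E_eq, show (Real.pi * t / (2 * p) : ℝ) = 2 * (Real.pi * t / (4 * p)) by ring,
    exp_two_mul_I_sub_one, norm_mul, Complex.norm_exp_ofReal_mul_I, one_mul,
    ← Complex.ofReal_sin, norm_mul, norm_mul, Complex.norm_two, Complex.norm_I, mul_one,
    Complex.norm_real, Real.norm_eq_abs]

lemma geom_bound (z : ℂ) (hz : ‖z‖ = 1) (h1 : z ≠ 1) (L : ℕ) :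
    ‖∑ m ∈ Finset.range L, z ^ m‖ ≤ 2 / ‖z - 1‖ := by
  rw [geom_sum_eq h1, norm_div]
  have hpos : 0 < ‖z - 1‖ := by
    exact norm_pos_iff.mpr (sub_ne_zero.mpr h1)
  have hb : ‖z ^ L - 1‖ ≤ 2 := by
    have := norm_sub_le (z ^ L) (1 : ℂ)
    simp only [norm_pow] at this
    rw [hz, norm_one, one_pow] at this
    linarith
  gcongr




noncomputable def c (p a b n : ℕ) : ℂ := E p ((a * n + b * n ^ 2 : ℕ) : ℤ)

lemma c_anti (p a b : ℕ) (hp : (p:ℂ) ≠ 0) (ha : Odd a) (n : ℕ) :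
    c p a b (n + 2 * p) = - c p a b n := by
  unfold c
  rw [show ((a * (n + 2*p) + b * (n + 2*p) ^ 2 : ℕ) : ℤ)
      = ((a * n + b * n ^ 2 : ℕ) : ℤ) + 2 * p * a + 4 * p * (b * n + p * b) by push_cast; ring]
  rw [E_add, E_add, E_two_p_odd p hp a ha, E_four_p p hp]
  ring

noncomputable def Ssum (p a b N : ℕ) : ℂ := ∑ n ∈ Finset.Icc 1 N, c p a b n

lemma Ssum_period (p a b : ℕ) (hp : (p:ℂ) ≠ 0) (ha : Odd a) (N : ℕ) :
    Ssum p a b (N + 4 * p) = Ssum p a b N := by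
  unfold Ssum
  rw [← Finset.Ico_add_one_right_eq_Icc, ← Finset.Ico_add_one_right_eq_Icc,
    ← Finset.sum_Ico_consecutive (fun n => c p a b n)
      (show 1 ≤ N + 1 by omega) (show N + 1 ≤ N + 4 * p + 1 by omega)]
  have h2 : ∑ n ∈ Finset.Ico (N + 1) (N + 4 * p + 1), c p a b n = 0 := by
    rw [Finset.sum_Ico_eq_sum_range, show N + 4 * p + 1 - (N + 1) = 2 * p + 2 * p by omega,
      Finset.sum_range_add]
    have hkey : ∀ k, c p a b (N + 1 + (2 * p + k)) = - c p a b (N + 1 + k) := fun k => by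
      rw [show N + 1 + (2 * p + k) = (N + 1 + k) + 2 * p by omega]
      exact c_anti p a b hp ha _
    simp [hkey]
  rw [h2, add_zero]

lemma Ssum_mod (p a b : ℕ) (hp : (p:ℂ) ≠ 0) (ha : Odd a) (hp0 : 0 < p) (N : ℕ) :
    Ssum p a b N = Ssum p a b (N % (4 * p)) := by
  induction N using Nat.strong_induction_on with
  | _ N ih =>
    by_cases h : N < 4 * p
    · rw [Nat.mod_eq_of_lt h]
    · push_neg at h
      calc Ssum p a b N = Ssum p a b (N - 4 * p + 4 * p) := by rw [Nat.sub_add_cancel h]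
        _ = Ssum p a b (N - 4 * p) := Ssum_period p a b hp ha _
        _ = Ssum p a b ((N - 4 * p) % (4 * p)) := ih _ (by omega)
        _ = Ssum p a b (N % (4 * p)) := by rw [← Nat.mod_eq_sub_mod h]



lemma sin_lower (p r : ℕ) (hp0 : 0 < p) (hr1 : 1 ≤ r) (hr2 : r < 2*p) :
    ((min r (2*p - r) : ℕ) : ℝ) / (p : ℝ) ≤ Real.sin (Real.pi * r / (2*p)) := by
  have hp' : (0:ℝ) < p := by exact_mod_cast hp0
  have hpi := Real.pi_pos
  rcases le_or_gt r p with h | h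
  · have hmin : min r (2*p - r) = r := by omega
    rw [hmin]
    have hrp : (r:ℝ) ≤ p := by exact_mod_cast h
    have hx0 : (0:ℝ) ≤ Real.pi * r / (2*p) := by positivity
    have hx1 : Real.pi * r / (2*p) ≤ Real.pi / 2 := by
      rw [div_le_div_iff₀ (by positivity) (by norm_num)]
      nlinarith
    have key := Real.mul_le_sin hx0 hx1
    calc (r:ℝ)/(p:ℝ) = 2 / Real.pi * (Real.pi * r / (2*p)) := by field_simp
      _ ≤ _ := key
  · have hmin : min r (2*p - r) = 2*p - r := by omega
    rw [hmin]
    have hcast : ((2*p - r : ℕ) : ℝ) = 2*(p:ℝ) - r := by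
      push_cast [Nat.cast_sub (by omega : r ≤ 2*p)]; ring
    have hsp : ((2*p - r:ℕ):ℝ) ≤ p := by
      rw [hcast]
      have : (p:ℝ) ≤ r := by exact_mod_cast h.le
      linarith
    have heq : Real.pi * r / (2*p) = Real.pi - Real.pi * ((2*p - r : ℕ):ℝ) / (2*p) := by
      rw [hcast]; field_simp; ring
    rw [heq, Real.sin_pi_sub]
    have hx0 : (0:ℝ) ≤ Real.pi * ((2*p - r:ℕ):ℝ) / (2*p) := by positivity
    have hx1 : Real.pi * ((2*p - r:ℕ):ℝ) / (2*p) ≤ Real.pi / 2 := by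
      rw [div_le_div_iff₀ (by positivity) (by norm_num)]
      nlinarith
    have key := Real.mul_le_sin hx0 hx1
    calc ((2*p-r:ℕ):ℝ)/(p:ℝ) = 2 / Real.pi * (Real.pi * ((2*p-r:ℕ):ℝ) / (2*p)) := by
          field_simp
      _ ≤ _ := key

lemma abs_sin_mod (p b h : ℕ) (hp0 : 0 < p) :
    |Real.sin (Real.pi * ((2*b*h : ℕ) : ℝ) / (4*p))|
      = Real.sin (Real.pi * (((b*h) % (2*p) : ℕ) : ℝ) / (2*p)) := by
  have hp' : (p:ℝ) ≠ 0 := by positivity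
  have hq : 2*p*((b*h)/(2*p)) + (b*h) % (2*p) = b*h := Nat.div_add_mod _ _
  have hbh : ((2*b*h : ℕ) : ℝ)
      = 2*(2*(p:ℝ)*(((b*h)/(2*p) : ℕ):ℝ) + (((b*h) % (2*p) : ℕ):ℝ)) := by
    have := congrArg (Nat.cast : ℕ → ℝ) hq
    push_cast at this ⊢
    linarith
  have key : Real.pi * ((2*b*h : ℕ) : ℝ) / (4*p)
      = Real.pi * (((b*h) % (2*p) : ℕ):ℝ) / (2*p) + (((b*h)/(2*p) : ℕ) : ℤ) * Real.pi := by
    rw [Int.cast_natCast, hbh]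
    field_simp
    ring
  rw [key, Real.sin_add_int_mul_pi, abs_mul]
  have h1 : |((-1:ℝ)) ^ ((((b*h)/(2*p) : ℕ) : ℤ))| = 1 := by
    rw [zpow_natCast]
    simp [abs_pow]
  rw [h1, one_mul]
  have hr2 : (b*h) % (2*p) < 2*p := Nat.mod_lt _ (by omega)
  rw [_root_.abs_of_nonneg]
  apply Real.sin_nonneg_of_nonneg_of_le_pi
  · positivity
  · rw [div_le_iff₀ (by positivity)]
    have : ((b*h % (2*p) : ℕ):ℝ) ≤ 2*p := by exact_mod_cast hr2.le
    nlinarith [Real.pi_pos]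




noncomputable def W (p b h : ℕ) : ℝ :=
  if 2*p ∣ h then (2*(p:ℝ))
  else (p:ℝ)/(((b*h) % (2*p) : ℕ):ℝ) + (p:ℝ)/(((2*p - (b*h) % (2*p) : ℕ) : ℕ):ℝ)

lemma W_nonneg (p b h : ℕ) : 0 ≤ W p b h := by
  unfold W; split_ifs <;> positivity

lemma per_h (p b : ℕ) (hp0 : 0 < p) (hb : Nat.Coprime b (2*p)) (h L : ℕ)
    (hh1 : 1 ≤ h) (hLh : L + h ≤ 4*p) :
    ‖∑ k ∈ Finset.range L, (E p ((2*b*h : ℕ) : ℤ)) ^ k‖ ≤ W p b h := by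
  unfold W
  split_ifs with hdvd
  · have h2p : 2*p ≤ h := Nat.le_of_dvd (by omega) hdvd
    have hL : ‖∑ k ∈ Finset.range L, (E p ((2*b*h : ℕ) : ℤ)) ^ k‖ ≤ L := by
      calc ‖∑ k ∈ Finset.range L, (E p ((2*b*h : ℕ) : ℤ)) ^ k‖
          ≤ ∑ k ∈ Finset.range L, ‖(E p ((2*b*h : ℕ) : ℤ)) ^ k‖ :=
            norm_sum_le _ _
        _ = ∑ k ∈ Finset.range L, 1 :=
            Finset.sum_congr rfl fun k _ => by rw [norm_pow, E_abs, one_pow]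
        _ = L := by simp
    have hL2 : (L:ℝ) ≤ 2*p := by exact_mod_cast (by omega : L ≤ 2*p)
    linarith
  · set r := (b*h) % (2*p) with hr
    have hrlt : r < 2*p := Nat.mod_lt _ (by omega)
    have hr0 : r ≠ 0 := by
      intro h0
      apply hdvd
      have hd : 2*p ∣ b*h := Nat.dvd_of_mod_eq_zero h0
      exact Nat.Coprime.dvd_of_dvd_mul_left hb.symm hd
    have hp' : (0:ℝ) < p := by exact_mod_cast hp0
    have hsin := sin_lower p r hp0 (by omega) hrlt
    have habs : ‖E p ((2*b*h:ℕ):ℤ) - 1‖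
        = 2 * Real.sin (Real.pi * (r:ℝ) / (2*p)) := by
      rw [E_sub_one_abs, Int.cast_natCast, abs_sin_mod p b h hp0]
    have hm1 : (1:ℝ) ≤ ((min r (2*p-r):ℕ):ℝ) := by exact_mod_cast (by omega : 1 ≤ min r (2*p-r))
    have hmin_pos : (0:ℝ) < ((min r (2*p-r):ℕ):ℝ)/(p:ℝ) := div_pos (by linarith) hp'
    have hsin_pos : 0 < Real.sin (Real.pi * (r:ℝ) / (2*p)) := lt_of_lt_of_le hmin_pos hsin
    have hzne : E p ((2*b*h:ℕ):ℤ) ≠ 1 := by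
      intro hz
      rw [hz] at habs
      simp at habs
      linarith
    calc ‖∑ k ∈ Finset.range L, (E p ((2*b*h : ℕ) : ℤ)) ^ k‖
        ≤ 2 / ‖E p ((2*b*h:ℕ):ℤ) - 1‖ := geom_bound _ (E_abs p _) hzne L
      _ = 1 / Real.sin (Real.pi * (r:ℝ) / (2*p)) := by rw [habs]; ring
      _ ≤ 1 / (((min r (2*p-r):ℕ):ℝ)/(p:ℝ)) := one_div_le_one_div_of_le hmin_pos hsin
      _ = (p:ℝ) / ((min r (2*p-r):ℕ):ℝ) := one_div_div _ _
      _ ≤ (p:ℝ)/(r:ℝ) + (p:ℝ)/(((2*p - r : ℕ):ℕ):ℝ) := by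
          rcases le_total r (2*p - r) with hc | hc
          · rw [show min r (2*p - r) = r by omega]
            have : (0:ℝ) ≤ (p:ℝ)/(((2*p - r : ℕ):ℕ):ℝ) := by positivity
            linarith
          · rw [show min r (2*p - r) = 2*p - r by omega]
            have : (0:ℝ) ≤ (p:ℝ)/((r:ℕ):ℝ) := by positivity
            linarith



lemma c_abs (p a b n : ℕ) : ‖c p a b n‖ = 1 := by unfold c; exact E_abs _ _

lemma F_eq (p a b h k : ℕ) :
    c p a b (h+k+1) * (starRingEnd ℂ) (c p a b (k+1))
      = E p ((h*(a+b*(h+2)) : ℕ) : ℤ) * (E p ((2*b*h : ℕ) : ℤ))^k := by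
  unfold c
  rw [E_conj, ← E_add, ← E_pow, ← E_add]
  congr 1
  push_cast
  ring

lemma weyl (p a b : ℕ) (hp0 : 0 < p) (hb : Nat.Coprime b (2*p)) (M : ℕ) (hM : M ≤ 4*p) :
    ‖Ssum p a b M‖ ^ 2 ≤ M + 2 * ∑ h ∈ Finset.Icc 1 (4*p), W p b h := by
  set d : ℕ → ℂ := fun n => c p a b (n+1) with hd
  have hS : Ssum p a b M = ∑ n ∈ Finset.range M, d n := by
    unfold Ssum
    rw [← Finset.Ico_add_one_right_eq_Icc, Finset.sum_Ico_eq_sum_range]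
    rw [Nat.add_sub_cancel]
    exact Finset.sum_congr rfl fun k _ => by rw [hd]; rw [Nat.add_comm 1 k]
  set F : ℕ → ℕ → ℂ := fun n m => d n * (starRingEnd ℂ) (d m) with hF
  set T : ℂ := ∑ n ∈ Finset.range M, ∑ m ∈ Finset.range n, F n m with hT
  -- square identity
  have hsq : ‖Ssum p a b M‖ ^ 2
      = ‖T + (M : ℂ) + (starRingEnd ℂ) T‖ := by
    have h1 : ‖Ssum p a b M‖ ^ 2
        = ‖Ssum p a b M * (starRingEnd ℂ) (Ssum p a b M)‖ := by
      rw [Complex.mul_conj, Complex.norm_real, Real.norm_eq_abs,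
        _root_.abs_of_nonneg (Complex.normSq_nonneg _), Complex.sq_norm]
    rw [h1]
    congr 1
    rw [hS, map_sum, Finset.sum_mul_sum]
    have hsplit : ∀ n ∈ Finset.range M,
        ∑ m ∈ Finset.range M, F n m
          = (∑ m ∈ Finset.range n, F n m) + F n n + ∑ m ∈ Finset.Ico (n+1) M, F n m := by
      intro n hn
      have hnM : n + 1 ≤ M := Finset.mem_range.mp hn
      rw [Finset.range_eq_Ico,
        ← Finset.sum_Ico_consecutive (fun m => F n m) (Nat.zero_le (n+1)) hnM,
        ← Finset.range_eq_Ico, Finset.sum_range_succ]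
    rw [Finset.sum_congr rfl hsplit]
    rw [Finset.sum_add_distrib, Finset.sum_add_distrib]
    have hdiag : ∑ n ∈ Finset.range M, F n n = (M : ℂ) := by
      have : ∀ n ∈ Finset.range M, F n n = 1 := by
        intro n _
        rw [hF]
        simp only
        rw [Complex.mul_conj, Complex.normSq_eq_norm_sq, c_abs]
        norm_num
      rw [Finset.sum_congr rfl this]
      simp
    have hupper : ∑ n ∈ Finset.range M, ∑ m ∈ Finset.Ico (n+1) M, F n m
        = (starRingEnd ℂ) T := by
      have hcomm : ∑ n ∈ Finset.range M, ∑ m ∈ Finset.Ico (n+1) M, F n m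
          = ∑ m ∈ Finset.range M, ∑ n ∈ Finset.range m, F n m :=
        Finset.sum_comm' (by
          intro x y
          simp only [Finset.mem_range, Finset.mem_Ico]
          omega)
      rw [hcomm, hT, map_sum]
      refine Finset.sum_congr rfl fun m _ => ?_
      rw [map_sum]
      refine Finset.sum_congr rfl fun n _ => ?_
      rw [hF]
      simp only [map_mul, Complex.conj_conj]
      ring
    rw [hdiag, hupper, ← hT]
  rw [hsq]
  -- triangle inequality
  have htri : ‖T + (M:ℂ) + (starRingEnd ℂ) T‖
      ≤ 2 * ‖T‖ + M := by
    calc ‖T + (M:ℂ) + (starRingEnd ℂ) T‖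
        ≤ ‖(T + (M:ℂ))‖ + ‖(starRingEnd ℂ) T‖ := norm_add_le _ _
      _ ≤ ‖T‖ + ‖(M:ℂ)‖ + ‖(starRingEnd ℂ) T‖ := by
          have := norm_add_le T (M:ℂ)
          linarith
      _ = 2 * ‖T‖ + M := by
          rw [Complex.norm_conj, Complex.norm_natCast]
          ring
  -- rewrite T
  have hTr : T = ∑ j ∈ Finset.range M, ∑ k ∈ Finset.range (M - (j+1)), F (j+1+k) k := by
    rw [hT]
    have step1 : ∀ n ∈ Finset.range M,
        ∑ m ∈ Finset.range n, F n m = ∑ j ∈ Finset.range n, F n (n-1-j) :=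
      fun n _ => (Finset.sum_range_reflect (fun m => F n m) n).symm
    rw [Finset.sum_congr rfl step1]
    have step2 : ∑ n ∈ Finset.range M, ∑ j ∈ Finset.range n, F n (n-1-j)
        = ∑ j ∈ Finset.range M, ∑ n ∈ Finset.Ico (j+1) M, F n (n-1-j) :=
      Finset.sum_comm' (by
        intro x y
        simp only [Finset.mem_range, Finset.mem_Ico]
        omega)
    rw [step2]
    refine Finset.sum_congr rfl fun j _ => ?_
    rw [Finset.sum_Ico_eq_sum_range]
    refine Finset.sum_congr rfl fun k _ => ?_
    congr 1
    omega
  -- bound abs T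
  have habsT : ‖T‖ ≤ ∑ h ∈ Finset.Icc 1 (4*p), W p b h := by
    have h1 : ‖T‖ ≤ ∑ j ∈ Finset.range M, W p b (j+1) := by
      rw [hTr]
      calc ‖∑ j ∈ Finset.range M, ∑ k ∈ Finset.range (M - (j+1)), F (j+1+k) k‖
          ≤ ∑ j ∈ Finset.range M,
              ‖∑ k ∈ Finset.range (M - (j+1)), F (j+1+k) k‖ :=
            norm_sum_le _ _
        _ ≤ ∑ j ∈ Finset.range M, W p b (j+1) := by
            refine Finset.sum_le_sum fun j hj => ?_
            have hinner : ∑ k ∈ Finset.range (M - (j+1)), F (j+1+k) k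
                = E p (((j+1)*(a+b*((j+1)+2)) : ℕ) : ℤ)
                  * ∑ k ∈ Finset.range (M - (j+1)), (E p ((2*b*(j+1) : ℕ) : ℤ))^k := by
              rw [Finset.mul_sum]
              exact Finset.sum_congr rfl fun k _ => F_eq p a b (j+1) k
            rw [hinner, norm_mul, E_abs, one_mul]
            exact per_h p b hp0 hb (j+1) (M - (j+1)) (by omega)
              (by have := Finset.mem_range.mp hj; omega)
    have h2 : ∑ j ∈ Finset.range M, W p b (j+1) = ∑ h ∈ Finset.Icc 1 M, W p b h := by
      rw [← Finset.Ico_add_one_right_eq_Icc, Finset.sum_Ico_eq_sum_range]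
      rw [Nat.add_sub_cancel]
      exact Finset.sum_congr rfl fun k _ => by rw [Nat.add_comm 1 k]
    rw [h2] at h1
    refine h1.trans (Finset.sum_le_sum_of_subset_of_nonneg
      (Finset.Icc_subset_Icc_right hM) fun h _ _ => W_nonneg p b h)
  have habsM : (M:ℝ) ≤ (M:ℝ) := le_refl _
  calc ‖T + (M:ℂ) + (starRingEnd ℂ) T‖ ≤ 2 * ‖T‖ + M := htri
    _ ≤ 2 * ∑ h ∈ Finset.Icc 1 (4*p), W p b h + M := by linarith
    _ = M + 2 * ∑ h ∈ Finset.Icc 1 (4*p), W p b h := by ring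



noncomputable def V (p r : ℕ) : ℝ := (p:ℝ)/(r:ℝ) + (p:ℝ)/(((2*p - r : ℕ)):ℝ)

lemma V_nonneg (p r : ℕ) : 0 ≤ V p r := by unfold V; positivity

lemma half_bound (p b lo : ℕ) (hp0 : 0 < p) (hb : Nat.Coprime b (2*p)) :
    ∑ h ∈ Finset.Ico lo (lo + 2*p), W p b h
      ≤ 2*(p:ℝ) + ∑ r ∈ Finset.Icc 1 (2*p-1), V p r := by
  classical
  rw [← Finset.sum_filter_add_sum_filter_not (Finset.Ico lo (lo + 2*p)) (fun h => 2*p ∣ h)]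
  have hdivpart : ∑ h ∈ (Finset.Ico lo (lo + 2*p)).filter (fun h => 2*p ∣ h), W p b h
      ≤ 2*(p:ℝ) := by
    have hcard : ((Finset.Ico lo (lo + 2*p)).filter (fun h => 2*p ∣ h)).card ≤ 1 := by
      rw [Finset.card_le_one]
      intro x hx y hy
      simp only [Finset.mem_filter, Finset.mem_Ico] at hx hy
      obtain ⟨⟨hx1, hx2⟩, hxd⟩ := hx
      obtain ⟨⟨hy1, hy2⟩, hyd⟩ := hy
      rcases le_total x y with hle | hle
      · have hd : 2*p ∣ y - x := Nat.dvd_sub hyd hxd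
        have := Nat.eq_zero_of_dvd_of_lt hd (show y - x < 2*p by omega)
        omega
      · have hd : 2*p ∣ x - y := Nat.dvd_sub hxd hyd
        have := Nat.eq_zero_of_dvd_of_lt hd (show x - y < 2*p by omega)
        omega
    have hconst : ∀ h ∈ (Finset.Ico lo (lo + 2*p)).filter (fun h => 2*p ∣ h),
        W p b h = 2*(p:ℝ) := by
      intro h hh
      simp only [Finset.mem_filter] at hh
      unfold W
      rw [if_pos hh.2]
    rw [Finset.sum_congr rfl hconst, Finset.sum_const]
    have : (((Finset.Ico lo (lo + 2*p)).filter (fun h => 2*p ∣ h)).card : ℝ) ≤ 1 := by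
      exact_mod_cast hcard
    have hp' : (0:ℝ) ≤ p := by positivity
    calc ((Finset.Ico lo (lo + 2*p)).filter (fun h => 2*p ∣ h)).card • (2*(p:ℝ))
        = (((Finset.Ico lo (lo + 2*p)).filter (fun h => 2*p ∣ h)).card : ℝ) * (2*(p:ℝ)) := by
          rw [nsmul_eq_mul]
      _ ≤ 1 * (2*(p:ℝ)) := by nlinarith
      _ = 2*(p:ℝ) := by ring
  have hndivpart : ∑ h ∈ (Finset.Ico lo (lo + 2*p)).filter (fun h => ¬ 2*p ∣ h), W p b h
      ≤ ∑ r ∈ Finset.Icc 1 (2*p-1), V p r := by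
    set Y := (Finset.Ico lo (lo + 2*p)).filter (fun h => ¬ 2*p ∣ h) with hY
    have hW : ∀ h ∈ Y, W p b h = V p ((b*h) % (2*p)) := by
      intro h hh
      simp only [hY, Finset.mem_filter] at hh
      unfold W V
      rw [if_neg hh.2]
    rw [Finset.sum_congr rfl hW]
    have hinj : ∀ x ∈ Y, ∀ y ∈ Y, (b*x) % (2*p) = (b*y) % (2*p) → x = y := by
      intro x hx y hy hxy
      simp only [hY, Finset.mem_filter, Finset.mem_Ico] at hx hy
      have hmod : x ≡ y [MOD 2*p] :=
        Nat.ModEq.cancel_left_of_coprime hb.symm hxy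
      rcases le_total x y with hle | hle
      · have hd : 2*p ∣ y - x := (Nat.modEq_iff_dvd' hle).mp hmod
        have := Nat.eq_zero_of_dvd_of_lt hd (show y - x < 2*p by omega)
        omega
      · have hd : 2*p ∣ x - y := (Nat.modEq_iff_dvd' hle).mp hmod.symm
        have := Nat.eq_zero_of_dvd_of_lt hd (show x - y < 2*p by omega)
        omega
    rw [← Finset.sum_image hinj]
    refine Finset.sum_le_sum_of_subset_of_nonneg ?_ (fun r _ _ => V_nonneg p r)
    intro r hr
    simp only [Finset.mem_image] at hr
    obtain ⟨h, hh, rfl⟩ := hr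
    simp only [hY, Finset.mem_filter, Finset.mem_Ico] at hh
    have hrlt : (b*h) % (2*p) < 2*p := Nat.mod_lt _ (by omega)
    have hr0 : (b*h) % (2*p) ≠ 0 := by
      intro h0
      apply hh.2
      have hd : 2*p ∣ b*h := Nat.dvd_of_mod_eq_zero h0
      exact Nat.Coprime.dvd_of_dvd_mul_left hb.symm hd
    simp only [Finset.mem_Icc]
    omega
  linarith

lemma harmonic_cast (n : ℕ) : ((harmonic n : ℚ) : ℝ) = ∑ r ∈ Finset.Icc 1 n, ((r:ℝ))⁻¹ := by
  rw [harmonic_eq_sum_Icc]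
  push_cast
  rfl

lemma Vsum_bound (p : ℕ) (hp0 : 0 < p) :
    ∑ r ∈ Finset.Icc 1 (2*p-1), V p r ≤ 2*(p:ℝ)*(1 + Real.log (2*p)) := by
  have hp' : (0:ℝ) < p := by exact_mod_cast hp0
  have hsum1 : ∑ r ∈ Finset.Icc 1 (2*p-1), (p:ℝ)/(r:ℝ)
      = (p:ℝ) * ((harmonic (2*p-1) : ℚ) : ℝ) := by
    rw [harmonic_cast, Finset.mul_sum]
    exact Finset.sum_congr rfl fun r _ => by rw [div_eq_mul_inv]
  have hsum2 : ∑ r ∈ Finset.Icc 1 (2*p-1), (p:ℝ)/(((2*p - r : ℕ)):ℝ)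
      ≤ (p:ℝ) * ((harmonic (2*p-1) : ℚ) : ℝ) := by
    have hinj : ∀ x ∈ Finset.Icc 1 (2*p-1), ∀ y ∈ Finset.Icc 1 (2*p-1),
        2*p - x = 2*p - y → x = y := by
      intro x hx y hy hxy
      simp only [Finset.mem_Icc] at hx hy
      omega
    rw [show ∑ r ∈ Finset.Icc 1 (2*p-1), (p:ℝ)/(((2*p - r : ℕ)):ℝ)
        = ∑ s ∈ (Finset.Icc 1 (2*p-1)).image (fun r => 2*p - r), (p:ℝ)/(s:ℝ) from
      (Finset.sum_image (f := fun s : ℕ => (p:ℝ)/(s:ℝ)) (g := fun r => 2*p - r) hinj).symm]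
    have hsub : (Finset.Icc 1 (2*p-1)).image (fun r => 2*p - r) ⊆ Finset.Icc 1 (2*p-1) := by
      intro s hs
      simp only [Finset.mem_image, Finset.mem_Icc] at hs ⊢
      obtain ⟨r, hr, rfl⟩ := hs
      omega
    calc ∑ s ∈ (Finset.Icc 1 (2*p-1)).image (fun r => 2*p - r), (p:ℝ)/(s:ℝ)
        ≤ ∑ s ∈ Finset.Icc 1 (2*p-1), (p:ℝ)/(s:ℝ) :=
          Finset.sum_le_sum_of_subset_of_nonneg hsub (fun s _ _ => by positivity)
      _ = (p:ℝ) * ((harmonic (2*p-1) : ℚ) : ℝ) := hsum1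
  have hH : ((harmonic (2*p-1) : ℚ) : ℝ) ≤ 1 + Real.log (2*p) := by
    refine (harmonic_le_one_add_log (2*p-1)).trans ?_
    have h1 : (1:ℝ) ≤ ((2*p-1 : ℕ):ℝ) := by exact_mod_cast (by omega : 1 ≤ 2*p-1)
    have h2 : ((2*p-1 : ℕ):ℝ) ≤ 2*(p:ℝ) := by
      push_cast [Nat.cast_sub (by omega : 1 ≤ 2*p)]
      linarith
    have := Real.log_le_log (by linarith) h2
    linarith
  have hHnn : 0 ≤ ((harmonic (2*p-1) : ℚ) : ℝ) := by
    have := harmonic_cast (2*p-1)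
    rw [this]
    positivity
  have hVsplit : ∑ r ∈ Finset.Icc 1 (2*p-1), V p r
      = ∑ r ∈ Finset.Icc 1 (2*p-1), (p:ℝ)/(r:ℝ)
        + ∑ r ∈ Finset.Icc 1 (2*p-1), (p:ℝ)/(((2*p - r : ℕ)):ℝ) := by
    unfold V
    rw [← Finset.sum_add_distrib]
  rw [hVsplit, hsum1]
  nlinarith

lemma Wsum_total (p b : ℕ) (hp0 : 0 < p) (hb : Nat.Coprime b (2*p)) :
    ∑ h ∈ Finset.Icc 1 (4*p), W p b h ≤ 4*(p:ℝ) + 4*(p:ℝ)*(1 + Real.log (2*p)) := by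
  have hsplit : ∑ h ∈ Finset.Icc 1 (4*p), W p b h
      = ∑ h ∈ Finset.Ico 1 (2*p+1), W p b h
        + ∑ h ∈ Finset.Ico (2*p+1) (4*p+1), W p b h := by
    rw [← Finset.Ico_add_one_right_eq_Icc]
    rw [← Finset.sum_Ico_consecutive (fun h => W p b h)
      (show 1 ≤ 2*p+1 by omega) (show 2*p+1 ≤ 4*p+1 by omega)]
  rw [hsplit]
  have h3 := Vsum_bound p hp0
  have hb1 : ∑ h ∈ Finset.Ico 1 (2*p+1), W p b h
      ≤ 2*(p:ℝ) + ∑ r ∈ Finset.Icc 1 (2*p-1), V p r := by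
    rw [show 2*p+1 = 1+2*p by omega]
    exact half_bound p b 1 hp0 hb
  have hb2 : ∑ h ∈ Finset.Ico (2*p+1) (4*p+1), W p b h
      ≤ 2*(p:ℝ) + ∑ r ∈ Finset.Icc 1 (2*p-1), V p r := by
    rw [show 4*p+1 = (2*p+1)+2*p by omega]
    exact half_bound p b (2*p+1) hp0 hb
  linarith



lemma c_eq (p a b n : ℕ) :
    Complex.exp (2 * Real.pi * Complex.I *
      ((a : ℂ) * (n : ℂ) + (b : ℂ) * (n : ℂ) ^ 2) / (4 * p)) = c p a b n := by
  unfold c E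
  congr 1
  push_cast
  ring

end PSB

open PSB in
theorem partial_sums_mod_four_p_bounded :
    ∃ C : ℝ, 0 < C ∧ ∀ p : ℕ, p.Prime → ∀ a b : ℕ,
      1 ≤ a → a ≤ p - 1 → 1 ≤ b → b ≤ p - 1 → Nat.gcd (a * b) (2 * p) = 1 →
      ∀ N : ℕ,
        ‖∑ n ∈ Finset.Icc 1 N,
          Complex.exp (2 * Real.pi * Complex.I *
            ((a : ℂ) * (n : ℂ) + (b : ℂ) * (n : ℂ) ^ 2) / (4 * p))‖ ≤
          C * Real.sqrt p * Real.log p := by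
  refine ⟨100, by norm_num, ?_⟩
  intro p hp a b ha1 ha2 hb1 hb2 hgcd N
  have hp0 : 0 < p := hp.pos
  have hp2 : 2 ≤ p := hp.two_le
  have hpc : (p:ℂ) ≠ 0 := by exact_mod_cast hp.ne_zero
  have hpr : (0:ℝ) < p := by exact_mod_cast hp0
  have ha : Odd a := by
    rcases Nat.even_or_odd a with he | ho
    · exfalso
      have h2 : 2 ∣ Nat.gcd (a*b) (2*p) :=
        Nat.dvd_gcd (dvd_mul_of_dvd_left he.two_dvd b) (dvd_mul_right 2 p)
      rw [hgcd] at h2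
      norm_num at h2
    · exact ho
  have hbc : Nat.Coprime b (2*p) := Nat.Coprime.coprime_dvd_left (dvd_mul_left b a) hgcd
  have hsum : (∑ n ∈ Finset.Icc 1 N,
      Complex.exp (2 * Real.pi * Complex.I *
        ((a : ℂ) * (n : ℂ) + (b : ℂ) * (n : ℂ) ^ 2) / (4 * p))) = Ssum p a b N :=
    Finset.sum_congr rfl fun n _ => c_eq p a b n
  rw [hsum, Ssum_mod p a b hpc ha hp0 N]
  set M := N % (4*p) with hMdef
  have hM : M < 4*p := Nat.mod_lt _ (by omega)
  by_cases hp2' : p = 2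
  · -- trivial bound
    have htriv : ‖Ssum p a b M‖ ≤ (M:ℝ) := by
      unfold Ssum
      calc ‖∑ n ∈ Finset.Icc 1 M, c p a b n‖
          ≤ ∑ n ∈ Finset.Icc 1 M, ‖c p a b n‖ := norm_sum_le _ _
        _ = ∑ n ∈ Finset.Icc 1 M, 1 := Finset.sum_congr rfl fun n _ => c_abs p a b n
        _ = ((Finset.Icc 1 M).card : ℝ) := by simp
        _ = (M:ℝ) := by rw [Nat.card_Icc]; simp
    have hM8 : (M:ℝ) ≤ 8 := by
      have : M ≤ 8 := by omega
      exact_mod_cast this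
    subst hp2'
    have hsqrt2 : (1:ℝ) ≤ Real.sqrt 2 := by
      rw [show (1:ℝ) = Real.sqrt 1 from (Real.sqrt_one).symm]
      exact Real.sqrt_le_sqrt (by norm_num)
    have hlog2 := Real.log_two_gt_d9
    have hfinal : (8:ℝ) ≤ 100 * Real.sqrt ((2:ℕ):ℝ) * Real.log ((2:ℕ):ℝ) := by
      push_cast
      nlinarith [mul_nonneg (sub_nonneg.mpr hsqrt2) (le_of_lt (lt_trans (by norm_num) hlog2))]
    linarith
  · -- p ≥ 3
    have hp3 : 3 ≤ p := by omega
    have hp3r : (3:ℝ) ≤ p := by exact_mod_cast hp3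
    have hlogp : 1 ≤ Real.log p := by
      rw [Real.le_log_iff_exp_le hpr]
      calc Real.exp 1 ≤ 2.7182818286 := Real.exp_one_lt_d9.le
        _ ≤ 3 := by norm_num
        _ ≤ (p:ℝ) := hp3r
    have hlog2le : Real.log 2 ≤ 1 := by
      have := Real.log_le_sub_one_of_pos (show (0:ℝ) < 2 by norm_num)
      linarith
    have hlogsplit : Real.log (2*(p:ℝ)) = Real.log 2 + Real.log p :=
      Real.log_mul (by norm_num) (by positivity)
    have hw := weyl p a b hp0 hbc M hM.le
    have hws := Wsum_total p b hp0 hbc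
    have hMr : (M:ℝ) ≤ 4*(p:ℝ) := by
      have : M ≤ 4*p := hM.le
      exact_mod_cast this
    have habs2 : ‖Ssum p a b M‖ ^ 2 ≤ 36 * (p:ℝ) * Real.log p := by
      have h1 : ‖Ssum p a b M‖ ^ 2
          ≤ (M:ℝ) + 2*(4*(p:ℝ) + 4*(p:ℝ)*(1 + Real.log (2*(p:ℝ)))) := by
        have h2 : (2:ℝ) * ∑ h ∈ Finset.Icc 1 (4*p), W p b h
            ≤ 2*(4*(p:ℝ) + 4*(p:ℝ)*(1 + Real.log (2*(p:ℝ)))) := by linarith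
        calc ‖Ssum p a b M‖ ^ 2
            ≤ (M:ℝ) + 2 * ∑ h ∈ Finset.Icc 1 (4*p), W p b h := hw
          _ ≤ _ := by linarith
      rw [hlogsplit] at h1
      nlinarith [hpr, hlogp, hlog2le]
    have hkey : ‖Ssum p a b M‖ ^ 2 ≤ (6 * Real.sqrt p * Real.log p)^2 := by
      have hsq : (6 * Real.sqrt (p:ℝ) * Real.log p)^2 = 36 * (p:ℝ) * (Real.log p)^2 := by
        rw [mul_pow, mul_pow, Real.sq_sqrt (le_of_lt hpr)]
        ring
      rw [hsq]
      nlinarith [hpr, hlogp]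
    have hnn : (0:ℝ) ≤ 6 * Real.sqrt p * Real.log p :=
      mul_nonneg (mul_nonneg (by norm_num) (Real.sqrt_nonneg _)) (by linarith)
    have habs : ‖Ssum p a b M‖ ≤ 6 * Real.sqrt p * Real.log p := by
      have h := Real.sqrt_le_sqrt hkey
      rwa [Real.sqrt_sq (norm_nonneg _), Real.sqrt_sq hnn] at h
    have : (0:ℝ) ≤ Real.sqrt p * Real.log p :=
      mul_nonneg (Real.sqrt_nonneg _) (by linarith)
    nlinarith
end
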